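/- Let f1 = U0 X1^{d1} + ... + U_{d1} X2^{d1} and f2 = V0 X1^{d2} + ... + V_{d2} X2^{d2} be homogeneous of degrees d1 ≤ d2 forming a regular sequence over a commutative ring A. Write sylv_{(0,0)}(f1,f2) = Σ_{i=0}^{δ} q_i X1^{δ−i} X2^i with q_i ∈ A, where δ = d1+d2−2. Then Res(f1,f2) = (−1)^{d1+1} Σ_{i=0}^{δ} SRes_{δ−i}(f1,f2) · q_i in A, where SRes_j denotes the j-th first-order subresultant of f1 and f2. -/

import Mathlib

open MvPolynomial

noncomputable section

/-- The Sylvester matrix of two binary forms of degrees `d1`, `d2` with coefficient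
sequences `U` (so `f1 = Σ U i · X1^{d1−i} X2^i`) and `V`. -/
def sylMatrix {A : Type*} [CommRing A] (d1 d2 : ℕ) (U V : ℕ → A) :
    Matrix (Fin (d1 + d2)) (Fin (d1 + d2)) A :=
  Matrix.of fun i j =>
    if (j : ℕ) < d2 then
      (if (j : ℕ) ≤ i ∧ (i : ℕ) ≤ (j : ℕ) + d1 then U ((i : ℕ) - j) else 0)
    else
      (if (j : ℕ) - d2 ≤ i ∧ (i : ℕ) ≤ (j : ℕ) - d2 + d2 then
        V ((i : ℕ) - ((j : ℕ) - d2)) else 0)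

/-- The resultant `Res(f1,f2)` as the determinant of the Sylvester matrix. -/
def res {A : Type*} [CommRing A] (d1 d2 : ℕ) (U V : ℕ → A) : A :=
  (sylMatrix d1 d2 U V).det

/-- The `(δ+1) × δ` matrix of the first-order subresultants: `d2 − 1` columns of shifted
`f1`-coefficients followed by `d1 − 1` columns of shifted `f2`-coefficients
(here `δ = d1 + d2 − 2` is passed as a parameter). -/
def subresMatrix {A : Type*} [CommRing A] (d1 d2 δ : ℕ) (U V : ℕ → A) :
    Matrix (Fin (δ + 1)) (Fin δ) A :=
  Matrix.of fun i j =>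
    if (j : ℕ) < d2 - 1 then
      (if (j : ℕ) ≤ i ∧ (i : ℕ) ≤ (j : ℕ) + d1 then U ((i : ℕ) - j) else 0)
    else
      (if (j : ℕ) - (d2 - 1) ≤ i ∧ (i : ℕ) ≤ (j : ℕ) - (d2 - 1) + d2 then
        V ((i : ℕ) - ((j : ℕ) - (d2 - 1))) else 0)

/-- The first-order subresultant `SRes_k(f1,f2)`: the signed `δ`-minor of the Sylvester
matrix obtained by deleting row `δ − k` of `subresMatrix`, with the sign coming from the
border expansion `det = Σ_i SRes_{δ−i} T_i` of the bordered Sylvester determinant. -/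
def sres {A : Type*} [CommRing A] (d1 d2 δ : ℕ) (U V : ℕ → A) (k : ℕ) : A :=
  (-1 : A) ^ ((δ - k) + δ) *
    ((subresMatrix d1 d2 δ U V).submatrix
      (Fin.succAbove ⟨δ - k, Nat.lt_succ_of_le (Nat.sub_le δ k)⟩) id).det

namespace Stmt7
open Matrix Finset
set_option linter.unusedSectionVars false
set_option maxHeartbeats 1000000

variable {R : Type*} [CommRing R]

def pr (a b : ℕ) : Fin 2 →₀ ℕ := Finsupp.single 0 a + Finsupp.single 1 b
@[simp] lemma pr_apply0 (a b : ℕ) : pr a b 0 = a := by simp [pr, Finsupp.single_apply]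
@[simp] lemma pr_apply1 (a b : ℕ) : pr a b 1 = b := by simp [pr, Finsupp.single_apply]
lemma pr_ext (m : Fin 2 →₀ ℕ) : m = pr (m 0) (m 1) := by
  ext x; match x with | 0 => simp | 1 => simp
lemma pr_eq_iff {a b c d : ℕ} : pr a b = pr c d ↔ a = c ∧ b = d := by
  constructor
  · intro h
    exact ⟨by simpa using congrArg (fun f => f (0 : Fin 2)) h,
      by simpa using congrArg (fun f => f (1 : Fin 2)) h⟩
  · rintro ⟨rfl, rfl⟩; rfl
lemma pr_le_iff {a b s t : ℕ} : pr s t ≤ pr a b ↔ s ≤ a ∧ t ≤ b := by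
  constructor
  · intro h; exact ⟨by simpa using h 0, by simpa using h 1⟩
  · intro ⟨h1, h2⟩ x
    match x with | 0 => simpa using h1 | 1 => simpa using h2
lemma pr_sub {a b s t : ℕ} : pr a b - pr s t = pr (a - s) (b - t) := by
  ext x
  match x with
  | 0 => simp [Finsupp.tsub_apply]
  | 1 => simp [Finsupp.tsub_apply]
lemma degree_two (m : Fin 2 →₀ ℕ) : m.degree = m 0 + m 1 := by
  rw [Finsupp.degree_apply, Finset.sum_subset (Finset.subset_univ _)]
  · exact Fin.sum_univ_two m
  · intro x _ hx; simpa using hx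
lemma C_mul_pow (r : R) (a b : ℕ) :
    C r * X 0 ^ a * X 1 ^ b = monomial (pr a b) r := by
  rw [X_pow_eq_monomial, X_pow_eq_monomial, mul_assoc, monomial_mul, mul_one, C_apply,
    monomial_mul, pr, zero_add, mul_one]

/-- the binary form of degree `d` with coefficients `c 0, ..., c d`. -/
def mk (c : ℕ → R) (d : ℕ) : MvPolynomial (Fin 2) R :=
  ∑ j ∈ Finset.range (d + 1), C (c j) * X 0 ^ (d - j) * X 1 ^ j

lemma coeff_pr_mk {c : ℕ → R} {d i : ℕ} (h : i ≤ d) :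
    coeff (pr (d - i) i) (mk c d) = c i := by
  rw [mk, coeff_sum]
  rw [Finset.sum_eq_single i]
  · rw [C_mul_pow, coeff_monomial, if_pos rfl]
  · intro j _ hj
    rw [C_mul_pow, coeff_monomial, if_neg]
    intro hc
    exact hj (pr_eq_iff.mp hc).2
  · intro hi; exact absurd (Finset.mem_range.mpr (by omega)) hi

lemma coeff_shift {a b s t : ℕ} (p : MvPolynomial (Fin 2) R) :
    coeff (pr a b) (X 0 ^ s * X 1 ^ t * p) =
      if s ≤ a ∧ t ≤ b then coeff (pr (a - s) (b - t)) p else 0 := by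
  have h1 : X (R := R) 0 ^ s * X 1 ^ t = monomial (pr s t) 1 := by
    rw [← C_mul_pow, _root_.map_one, one_mul]
  rw [h1, coeff_monomial_mul']
  simp only [pr_le_iff, pr_sub, one_mul]

lemma coeff_X0_mul {a b : ℕ} (p : MvPolynomial (Fin 2) R) :
    coeff (pr a b) (X 0 * p) = if 1 ≤ a then coeff (pr (a - 1) b) p else 0 := by
  have : X (R := R) 0 * p = X 0 ^ 1 * X 1 ^ 0 * p := by ring
  rw [this, coeff_shift]
  simp

lemma coeff_X1_mul {a b : ℕ} (p : MvPolynomial (Fin 2) R) :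
    coeff (pr a b) (X 1 * p) = if 1 ≤ b then coeff (pr a (b - 1)) p else 0 := by
  have : X (R := R) 1 * p = X 0 ^ 0 * X 1 ^ 1 * p := by ring
  rw [this, coeff_shift]
  simp

lemma hom_rep {p : MvPolynomial (Fin 2) R} {d : ℕ} (hp : p.IsHomogeneous d) :
    p = mk (fun i => coeff (pr (d - i) i) p) d := by
  apply MvPolynomial.ext
  intro m
  rw [mk, coeff_sum]
  simp_rw [C_mul_pow, coeff_monomial]
  by_cases hm : m 0 + m 1 = d
  · have hm1 : m = pr (d - m 1) (m 1) := by
      nth_rewrite 1 [pr_ext m]; exact pr_eq_iff.mpr ⟨by omega, rfl⟩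
    rw [Finset.sum_eq_single (m 1)]
    · rw [if_pos hm1.symm, ← hm1]
    · intro j _ hj
      rw [if_neg]
      intro hc
      exact hj (pr_eq_iff.mp (hc.trans (pr_ext m))).2
    · intro hi; exact absurd (Finset.mem_range.mpr (by omega)) hi
  · have h0 : coeff m p = 0 := hp.coeff_eq_zero (by rw [degree_two]; exact hm)
    rw [h0]
    refine (Finset.sum_eq_zero ?_).symm
    intro j hj
    rw [if_neg]
    intro hc
    apply hm
    rw [← hc]
    simp only [pr_apply0, pr_apply1]
    have : j ≤ d := by simpa using Nat.lt_succ_iff.mp (Finset.mem_range.mp hj)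
    omega


set_option linter.unusedSectionVars false

variable {R : Type*} [CommRing R] {n : Type*} [DecidableEq n] [Fintype n]

lemma det_updateColumn_expand_aux (M : Matrix n n R) (l : n) (s : Finset n) (v : n → R) :
    det (M.updateCol l (fun i => if i ∈ s then v i else 0)) =
      ∑ k ∈ s, v k * det (M.updateCol l (Pi.single k 1)) := by
  induction s using Finset.induction_on with
  | empty =>
      simp only [Finset.notMem_empty, if_false, Finset.sum_empty]
      apply det_eq_zero_of_column_eq_zero l
      intro i
      rw [updateCol_self]
  | @insert a s ha ih =>
      have hsplit : (fun i => if i ∈ insert a s then v i else 0) =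
          (v a • (Pi.single a (1 : R) : n → R) + fun i => if i ∈ s then v i else 0) := by
        funext i
        by_cases hia : i = a
        · subst hia
          simp [ha]
        · simp [hia, Pi.single_apply]
      rw [hsplit, det_updateCol_add, det_updateCol_smul, ih, Finset.sum_insert ha]

lemma det_updateColumn_expand (M : Matrix n n R) (l : n) (v : n → R) :
    det (M.updateCol l v) = ∑ k, v k * det (M.updateCol l (Pi.single k 1)) := by
  have h : v = fun i => if i ∈ Finset.univ then v i else 0 := by simp
  nth_rewrite 1 [h]
  exact det_updateColumn_expand_aux M l Finset.univ v

lemma one_col (c : n) : (fun j => (1 : Matrix n n R) j c) = Pi.single c 1 := by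
  funext j
  simp [Matrix.one_apply, Pi.single_apply]

lemma det_one_updateColumn_single (c k : n) :
    det ((1 : Matrix n n R).updateCol c (Pi.single k 1)) = if k = c then 1 else 0 := by
  by_cases hk : k = c
  · subst hk
    rw [if_pos rfl, ← one_col k, updateCol_eq_self, det_one]
  · rw [if_neg hk]
    apply det_zero_of_column_eq hk
    intro r
    rw [updateCol_ne hk, updateCol_self, Matrix.one_apply, Pi.single_apply]

lemma updateColumn_comm (M : Matrix n n R) {c l : n} (h : c ≠ l) (u v : n → R) :
    (M.updateCol c u).updateCol l v = (M.updateCol l v).updateCol c u := by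
  ext i j
  by_cases hj : j = l <;> by_cases hj' : j = c
  · exact absurd (hj'.symm.trans hj) h
  · subst hj; simp [Matrix.updateCol_apply, h.symm]
  · subst hj'; simp [Matrix.updateCol_apply, h]
  · simp [Matrix.updateCol_apply, hj, hj']

lemma det_swap_one {c l : n} (h : c ≠ l) :
    det (((1 : Matrix n n R).updateCol c (Pi.single l 1)).updateCol l (Pi.single c 1))
      = -1 := by
  have heq : ((1 : Matrix n n R).updateCol c (Pi.single l 1)).updateCol l (Pi.single c 1) =
      (1 : Matrix n n R).submatrix id (Equiv.swap c l) := by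
    ext i j
    rw [Matrix.submatrix_apply, id_eq]
    by_cases hj : j = l <;> by_cases hj' : j = c
    · exact absurd (hj'.symm.trans hj) h
    · subst hj
      rw [Equiv.swap_apply_right, updateCol_self, Matrix.one_apply, Pi.single_apply]
    · subst hj'
      rw [Equiv.swap_apply_left, updateCol_ne h, updateCol_self, Matrix.one_apply,
        Pi.single_apply]
    · rw [Equiv.swap_apply_of_ne_of_ne hj' hj, updateCol_ne hj, updateCol_ne hj']
  rw [heq, det_permute', Equiv.Perm.sign_swap h, det_one]
  simp

lemma det_one_update_two {c l : n} (h : c ≠ l) (u v : n → R) :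
    det (((1 : Matrix n n R).updateCol c u).updateCol l v)
      = u c * v l - u l * v c := by
  have hM1 : det ((1 : Matrix n n R).updateCol c u) = u c := by
    rw [det_updateColumn_expand]
    rw [Finset.sum_eq_single c]
    · rw [det_one_updateColumn_single, if_pos rfl, mul_one]
    · intro k _ hk
      rw [det_one_updateColumn_single, if_neg hk, mul_zero]
    · simp
  have hD : ∀ k : n, det (((1 : Matrix n n R).updateCol c u).updateCol l (Pi.single k 1))
      = if k = l then u c else if k = c then -(u l) else 0 := by
    intro k
    by_cases hkl : k = l
    · subst hkl
      rw [if_pos rfl]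
      have : ((1 : Matrix n n R).updateCol c u).updateCol k (Pi.single k 1)
          = (1 : Matrix n n R).updateCol c u := by
        have hcol : (Pi.single k (1 : R)) = fun j => ((1 : Matrix n n R).updateCol c u) j k := by
          funext j
          rw [updateCol_ne (Ne.symm h)]
          rw [Matrix.one_apply, Pi.single_apply]
        rw [hcol, updateCol_eq_self]
      rw [this, hM1]
    · rw [if_neg hkl]
      by_cases hkc : k = c
      · subst hkc
        rw [if_pos rfl]
        rw [updateColumn_comm _ h, det_updateColumn_expand]
        rw [Finset.sum_eq_single l]
        · rw [updateColumn_comm _ (Ne.symm h), det_swap_one h]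
          ring
        · intro k' _ hk'
          by_cases hk'k : k' = k
          · subst hk'k
            rw [det_zero_of_column_eq h (fun r => ?_), mul_zero]
            rw [updateCol_self, updateCol_ne (Ne.symm h), updateCol_self]
          · rw [det_zero_of_column_eq hk'k (fun r => ?_), mul_zero]
            rw [updateCol_self, updateCol_ne hk'k]
            have hk'l : k' ≠ l := hk'
            rw [updateCol_ne hk'l, Matrix.one_apply, Pi.single_apply]
        · simp
      · rw [if_neg hkc]
        apply det_zero_of_column_eq hkl (fun r => ?_)
        rw [updateCol_ne hkl]  -- entry (r,k)
        rw [updateCol_ne hkc, updateCol_self, Matrix.one_apply, Pi.single_apply]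
  rw [det_updateColumn_expand]
  have hstep : ∀ k : n, v k * det (((1 : Matrix n n R).updateCol c u).updateCol l
      (Pi.single k 1)) = if k = l then v k * u c else if k = c then v k * -(u l) else 0 := by
    intro k
    rw [hD k]
    split_ifs <;> ring
  calc (∑ k, v k * det (((1 : Matrix n n R).updateCol c u).updateCol l (Pi.single k 1)))
      = ∑ k, (if k = l then v k * u c else if k = c then v k * -(u l) else 0) :=
        Finset.sum_congr rfl (fun k _ => hstep k)
    _ = ∑ k ∈ ({l, c} : Finset n), (if k = l then v k * u c else if k = c then v k * -(u l)
        else 0) := by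
        refine (Finset.sum_subset (Finset.subset_univ ({l, c} : Finset n)) ?_).symm
        intro k _ hk
        simp only [Finset.mem_insert, Finset.mem_singleton] at hk
        push_neg at hk
        rw [if_neg hk.1, if_neg hk.2]
    _ = u c * v l - u l * v c := by
        rw [Finset.sum_pair (Ne.symm h)]
        rw [if_pos rfl, if_neg h, if_pos rfl]
        ring


/-! ### The generic objects -/

section Core

variable {R : Type*} [CommRing R]

/-- `f = X0 * a + X1 * b` where `a`, `b` are binary forms of degree `e`. -/
def f1p (a b : ℕ → R) (e : ℕ) : MvPolynomial (Fin 2) R := X 0 * mk a e + X 1 * mk b e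

/-- coefficients of `f1p` -/
def Uc (a b : ℕ → R) (e : ℕ) : ℕ → R := fun i => coeff (pr (e + 1 - i) i) (f1p a b e)

/-- The Sylvester form. -/
def sylv (a b c d : ℕ → R) (e1 e2 : ℕ) : MvPolynomial (Fin 2) R :=
  mk a e1 * mk d e2 - mk b e1 * mk c e2

/-- coefficients of the Sylvester form -/
def Qc (a b c d : ℕ → R) (e1 e2 : ℕ) : ℕ → R :=
  fun i => coeff (pr (e1 + e2 - i) i) (sylv a b c d e1 e2)

lemma pr_add {a b s t : ℕ} : pr a b + pr s t = pr (a + s) (b + t) := by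
  ext x
  match x with
  | 0 => simp
  | 1 => simp

lemma mk_monomial (u : ℕ → R) (e : ℕ) :
    mk u e = ∑ j ∈ Finset.range (e + 1), monomial (pr (e - j) j) (u j) :=
  Finset.sum_congr rfl fun j _ => C_mul_pow _ _ _

lemma coeff_top_mul (u v : ℕ → R) (e f : ℕ) :
    coeff (pr 0 (e + f)) (mk u e * mk v f) = u e * v f := by
  rw [mk_monomial, mk_monomial, Finset.sum_mul_sum]
  simp_rw [monomial_mul, pr_add]
  rw [coeff_sum]
  rw [Finset.sum_eq_single e]
  · rw [coeff_sum]
    rw [Finset.sum_eq_single f]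
    · rw [coeff_monomial, if_pos]
      congr 1 <;> omega
    · intro k hk hkf
      rw [coeff_monomial, if_neg]
      intro hc
      have := pr_eq_iff.mp hc
      have hk' : k ≤ f := by simpa using Nat.lt_succ_iff.mp (Finset.mem_range.mp hk)
      omega
    · intro hf; exact absurd (Finset.mem_range.mpr (by omega)) hf
  · intro j hj hje
    have hj' : j ≤ e := by simpa using Nat.lt_succ_iff.mp (Finset.mem_range.mp hj)
    rw [coeff_sum]
    apply Finset.sum_eq_zero
    intro k hk
    have hk' : k ≤ f := by simpa using Nat.lt_succ_iff.mp (Finset.mem_range.mp hk)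
    rw [coeff_monomial, if_neg]
    intro hc
    have := pr_eq_iff.mp hc
    omega
  · intro he; exact absurd (Finset.mem_range.mpr (by omega)) he

lemma QcTop (a b c d : ℕ → R) (e1 e2 : ℕ) :
    Qc a b c d e1 e2 (e1 + e2) = a e1 * d e2 - b e1 * c e2 := by
  unfold Qc sylv
  rw [coeff_sub]
  have h0 : e1 + e2 - (e1 + e2) = 0 := by omega
  rw [h0, coeff_top_mul, coeff_top_mul]

lemma sylv_X0 (a b c d : ℕ → R) (e1 e2 : ℕ) :
    mk d e2 * f1p a b e1 - mk b e1 * f1p c d e2 = X 0 * sylv a b c d e1 e2 := by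
  unfold f1p sylv; ring

lemma sylv_X1 (a b c d : ℕ → R) (e1 e2 : ℕ) :
    mk a e1 * f1p c d e2 - mk c e2 * f1p a b e1 = X 1 * sylv a b c d e1 e2 := by
  unfold f1p sylv; ring

lemma colSyl1 (a b c d : ℕ → R) (e1 e2 : ℕ) (i j : Fin (e1 + 1 + (e2 + 1)))
    (hj : (j : ℕ) < e2 + 1) :
    sylMatrix (e1 + 1) (e2 + 1) (Uc a b e1) (Uc c d e2) i j
      = coeff (pr (e1 + e2 + 1 - (i : ℕ)) (i : ℕ))
          (X 0 ^ (e2 - (j : ℕ)) * X 1 ^ (j : ℕ) * f1p a b e1) := by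
  have hi : (i : ℕ) < e1 + 1 + (e2 + 1) := i.isLt
  rw [coeff_shift, sylMatrix]
  simp only [Matrix.of_apply]
  rw [if_pos hj]
  by_cases hcond : (j : ℕ) ≤ (i : ℕ) ∧ (i : ℕ) ≤ (j : ℕ) + (e1 + 1)
  · rw [if_pos hcond, if_pos (by omega)]
    unfold Uc
    have harg : e1 + e2 + 1 - (i : ℕ) - (e2 - (j : ℕ)) = e1 + 1 - ((i : ℕ) - (j : ℕ)) := by omega
    rw [harg]
  · rw [if_neg hcond, if_neg (by omega)]

lemma colSyl2 (a b c d : ℕ → R) (e1 e2 : ℕ) (i j : Fin (e1 + 1 + (e2 + 1)))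
    (hj : e2 + 1 ≤ (j : ℕ)) :
    sylMatrix (e1 + 1) (e2 + 1) (Uc a b e1) (Uc c d e2) i j
      = coeff (pr (e1 + e2 + 1 - (i : ℕ)) (i : ℕ))
          (X 0 ^ (e1 - ((j : ℕ) - (e2 + 1))) * X 1 ^ ((j : ℕ) - (e2 + 1)) * f1p c d e2) := by
  have hi : (i : ℕ) < e1 + 1 + (e2 + 1) := i.isLt
  have hjn : (j : ℕ) < e1 + 1 + (e2 + 1) := j.isLt
  rw [coeff_shift, sylMatrix]
  simp only [Matrix.of_apply]
  rw [if_neg (by omega)]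
  by_cases hcond : (j : ℕ) - (e2 + 1) ≤ (i : ℕ) ∧ (i : ℕ) ≤ (j : ℕ) - (e2 + 1) + (e2 + 1)
  · rw [if_pos hcond, if_pos (by omega)]
    unfold Uc
    have harg : e1 + e2 + 1 - (i : ℕ) - (e1 - ((j : ℕ) - (e2 + 1)))
        = e2 + 1 - ((i : ℕ) - ((j : ℕ) - (e2 + 1))) := by omega
    rw [harg]
  · rw [if_neg hcond, if_neg (by omega)]

end Core

section Core2

variable {R : Type*} [CommRing R]

def w2f (b d : ℕ → R) (e1 e2 : ℕ) : ℕ → R :=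
  fun j => if j < e2 + 1 then d j else -(b (j - (e2 + 1)))

def w1f (a c : ℕ → R) (e1 e2 : ℕ) : ℕ → R :=
  fun j => if j < e2 + 1 then -(c j) else a (j - (e2 + 1))

/-- generic sum-splitting computation: pairing a column-vector function against
the Sylvester matrix computes a coefficient of a polynomial combination. -/
lemma syl_pair (a b c d : ℕ → R) (e1 e2 : ℕ) (g1 g2 : ℕ → R)
    (i : Fin (e1 + 1 + (e2 + 1))) :
    (∑ j : Fin (e1 + 1 + (e2 + 1)),
      sylMatrix (e1 + 1) (e2 + 1) (Uc a b e1) (Uc c d e2) i j *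
        (if (j : ℕ) < e2 + 1 then g1 (j : ℕ) else g2 ((j : ℕ) - (e2 + 1))))
    = coeff (pr (e1 + e2 + 1 - (i : ℕ)) (i : ℕ))
        (mk g1 e2 * f1p a b e1 + mk g2 e1 * f1p c d e2) := by
  set m := pr (e1 + e2 + 1 - (i : ℕ)) (i : ℕ) with hm
  set F : ℕ → R := (fun jn : ℕ =>
      if jn < e2 + 1 then coeff m (X 0 ^ (e2 - jn) * X 1 ^ jn * f1p a b e1) * g1 jn
      else coeff m (X 0 ^ (e1 - (jn - (e2 + 1))) * X 1 ^ (jn - (e2 + 1)) * f1p c d e2)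
        * g2 (jn - (e2 + 1))) with hF
  have hstep : ∀ j : Fin (e1 + 1 + (e2 + 1)),
      sylMatrix (e1 + 1) (e2 + 1) (Uc a b e1) (Uc c d e2) i j *
        (if (j : ℕ) < e2 + 1 then g1 (j : ℕ) else g2 ((j : ℕ) - (e2 + 1)))
      = F (j : ℕ) := by
    intro j
    rw [hF]
    by_cases hj : (j : ℕ) < e2 + 1
    · beta_reduce
      rw [colSyl1 a b c d e1 e2 i j hj, if_pos hj, if_pos hj]
    · beta_reduce
      rw [colSyl2 a b c d e1 e2 i j (by omega), if_neg hj, if_neg hj]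
  rw [Finset.sum_congr rfl (fun j _ => hstep j)]
  rw [Fin.sum_univ_eq_sum_range F]
  rw [Finset.range_eq_Ico,
    ← Finset.sum_Ico_consecutive _ (Nat.zero_le (e2 + 1))
      (by omega : e2 + 1 ≤ e1 + 1 + (e2 + 1))]
  have hblock1 : (∑ jn ∈ Finset.Ico 0 (e2 + 1), F jn)
      = coeff m (mk g1 e2 * f1p a b e1) := by
    rw [Nat.Ico_zero_eq_range, mk, Finset.sum_mul, coeff_sum]
    apply Finset.sum_congr rfl
    intro jn hjn
    have hjn' : jn < e2 + 1 := Finset.mem_range.mp hjn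
    rw [hF]
    beta_reduce
    rw [if_pos hjn']
    have hassoc : C (g1 jn) * X 0 ^ (e2 - jn) * X 1 ^ jn * f1p a b e1
        = C (g1 jn) * (X 0 ^ (e2 - jn) * X 1 ^ jn * f1p a b e1) := by ring
    rw [hassoc, coeff_C_mul, mul_comm]
  have hblock2 : (∑ jn ∈ Finset.Ico (e2 + 1) (e1 + 1 + (e2 + 1)), F jn)
      = coeff m (mk g2 e1 * f1p c d e2) := by
    rw [Finset.sum_Ico_eq_sum_range]
    have hsize : e1 + 1 + (e2 + 1) - (e2 + 1) = e1 + 1 := by omega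
    rw [hsize, mk, Finset.sum_mul, coeff_sum]
    apply Finset.sum_congr rfl
    intro k hk
    rw [hF]
    beta_reduce
    rw [if_neg (by omega)]
    have hidx : e2 + 1 + k - (e2 + 1) = k := by omega
    rw [hidx]
    have hassoc : C (g2 k) * X 0 ^ (e1 - k) * X 1 ^ k * f1p c d e2
        = C (g2 k) * (X 0 ^ (e1 - k) * X 1 ^ k * f1p c d e2) := by ring
    rw [hassoc, coeff_C_mul, mul_comm]
  rw [hblock1, hblock2, coeff_add]

lemma mulw2 (a b c d : ℕ → R) (e1 e2 : ℕ) (i : Fin (e1 + 1 + (e2 + 1))) :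
    (∑ j : Fin (e1 + 1 + (e2 + 1)),
      sylMatrix (e1 + 1) (e2 + 1) (Uc a b e1) (Uc c d e2) i j * w2f b d e1 e2 (j : ℕ))
    = if (i : ℕ) ≤ e1 + e2 then Qc a b c d e1 e2 (i : ℕ) else 0 := by
  have h := syl_pair a b c d e1 e2 d (fun k => -(b k)) i
  have hw : ∀ j : Fin (e1 + 1 + (e2 + 1)), w2f b d e1 e2 (j : ℕ)
      = (if (j : ℕ) < e2 + 1 then d (j : ℕ) else (fun k => -(b k)) ((j : ℕ) - (e2 + 1))) := by
    intro j; rfl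
  simp_rw [hw]
  rw [h]
  have hpoly : mk d e2 * f1p a b e1 + mk (fun k => -(b k)) e1 * f1p c d e2
      = X 0 * sylv a b c d e1 e2 := by
    rw [← sylv_X0 a b c d e1 e2]
    have : mk (fun k => -(b k)) e1 = -(mk b e1) := by
      unfold mk
      rw [← Finset.sum_neg_distrib]
      apply Finset.sum_congr rfl
      intro j _
      rw [map_neg]
      ring
    rw [this]
    ring
  rw [hpoly, coeff_X0_mul]
  have hi : (i : ℕ) < e1 + 1 + (e2 + 1) := i.isLt
  by_cases hile : (i : ℕ) ≤ e1 + e2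
  · rw [if_pos (by omega), if_pos hile]
    unfold Qc
    have harg : e1 + e2 + 1 - (i : ℕ) - 1 = e1 + e2 - (i : ℕ) := by omega
    rw [harg]
  · rw [if_neg (by omega), if_neg hile]

lemma mulw1 (a b c d : ℕ → R) (e1 e2 : ℕ) (i : Fin (e1 + 1 + (e2 + 1))) :
    (∑ j : Fin (e1 + 1 + (e2 + 1)),
      sylMatrix (e1 + 1) (e2 + 1) (Uc a b e1) (Uc c d e2) i j * w1f a c e1 e2 (j : ℕ))
    = if 1 ≤ (i : ℕ) then Qc a b c d e1 e2 ((i : ℕ) - 1) else 0 := by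
  have h := syl_pair a b c d e1 e2 (fun k => -(c k)) a i
  have hw : ∀ j : Fin (e1 + 1 + (e2 + 1)), w1f a c e1 e2 (j : ℕ)
      = (if (j : ℕ) < e2 + 1 then (fun k => -(c k)) (j : ℕ) else a ((j : ℕ) - (e2 + 1))) := by
    intro j; rfl
  simp_rw [hw]
  rw [h]
  have hpoly : mk (fun k => -(c k)) e2 * f1p a b e1 + mk a e1 * f1p c d e2
      = X 1 * sylv a b c d e1 e2 := by
    rw [← sylv_X1 a b c d e1 e2]
    have : mk (fun k => -(c k)) e2 = -(mk c e2) := by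
      unfold mk
      rw [← Finset.sum_neg_distrib]
      apply Finset.sum_congr rfl
      intro j _
      rw [map_neg]
      ring
    rw [this]
    ring
  rw [hpoly, coeff_X1_mul]
  have hi : (i : ℕ) < e1 + 1 + (e2 + 1) := i.isLt
  by_cases hile : 1 ≤ (i : ℕ)
  · rw [if_pos hile, if_pos hile]
    unfold Qc
    have harg : e1 + e2 + 1 - (i : ℕ) = e1 + e2 - ((i : ℕ) - 1) := by omega
    rw [harg]
  · rw [if_neg hile, if_neg hile]

end Core2

section Core3

variable {R : Type*} [CommRing R]

lemma succAbove_val {m : ℕ} (i : Fin (m + 1)) (x : Fin m) :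
    ((i.succAbove x : Fin (m + 1)) : ℕ) = if (x : ℕ) < (i : ℕ) then (x : ℕ) else (x : ℕ) + 1 := by
  rw [Fin.succAbove]
  by_cases h : (x : ℕ) < (i : ℕ)
  · rw [if_pos (Fin.lt_def.mpr (by simpa using h)), if_pos h, Fin.coe_castSucc]
  · rw [if_neg (fun hc => h (by simpa using Fin.lt_def.mp hc)), if_neg h, Fin.val_succ]

def ce2 (e1 e2 : ℕ) : Fin (e1 + 1 + (e2 + 1)) := ⟨e2, by omega⟩
def cl (e1 e2 : ℕ) : Fin (e1 + 1 + (e2 + 1)) := ⟨e1 + e2 + 1, by omega⟩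

def Pm (a b c d : ℕ → R) (e1 e2 : ℕ) :
    Matrix (Fin (e1 + 1 + (e2 + 1))) (Fin (e1 + 1 + (e2 + 1))) R :=
  ((1 : Matrix (Fin (e1 + 1 + (e2 + 1))) (Fin (e1 + 1 + (e2 + 1))) R).updateCol
      (ce2 e1 e2) (fun k => w2f b d e1 e2 (k : ℕ))).updateCol
    (cl e1 e2) (fun k => w1f a c e1 e2 (k : ℕ))

lemma ce2_ne_cl (e1 e2 : ℕ) : ce2 e1 e2 ≠ cl e1 e2 := by
  intro h
  have := congrArg Fin.val h
  simp only [ce2, cl] at this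
  omega

lemma detPm (a b c d : ℕ → R) (e1 e2 : ℕ) :
    det (Pm a b c d e1 e2) = Qc a b c d e1 e2 (e1 + e2) := by
  rw [Pm, det_one_update_two (ce2_ne_cl e1 e2), QcTop]
  have hv1 : ((ce2 e1 e2 : Fin (e1 + 1 + (e2 + 1))) : ℕ) = e2 := rfl
  have hv2 : ((cl e1 e2 : Fin (e1 + 1 + (e2 + 1))) : ℕ) = e1 + e2 + 1 := rfl
  rw [hv1, hv2]
  unfold w2f w1f
  rw [if_pos (by omega : e2 < e2 + 1), if_pos (by omega : e2 < e2 + 1),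
    if_neg (by omega : ¬ (e1 + e2 + 1 < e2 + 1)), if_neg (by omega : ¬ (e1 + e2 + 1 < e2 + 1))]
  have h3 : e1 + e2 + 1 - (e2 + 1) = e1 := by omega
  rw [h3]
  ring

def Gd (a b c d : ℕ → R) (e1 e2 : ℕ) :
    Matrix (Fin (e1 + 1 + (e2 + 1))) (Fin (e1 + 1 + (e2 + 1))) R :=
  Matrix.of fun i j =>
    if (j : ℕ) = e2 then (if (i : ℕ) ≤ e1 + e2 then Qc a b c d e1 e2 (i : ℕ) else 0)
    else if (j : ℕ) = e1 + e2 + 1 then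
      (if 1 ≤ (i : ℕ) then Qc a b c d e1 e2 ((i : ℕ) - 1) else 0)
    else sylMatrix (e1 + 1) (e2 + 1) (Uc a b e1) (Uc c d e2) i j

lemma hSylP (a b c d : ℕ → R) (e1 e2 : ℕ) :
    sylMatrix (e1 + 1) (e2 + 1) (Uc a b e1) (Uc c d e2) * Pm a b c d e1 e2
      = Gd a b c d e1 e2 := by
  ext i j
  rw [Matrix.mul_apply]
  by_cases hj2 : j = cl e1 e2
  · subst hj2
    have hP : ∀ k, Pm a b c d e1 e2 k (cl e1 e2) = w1f a c e1 e2 (k : ℕ) := by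
      intro k; rw [Pm, updateCol_self]
    rw [Finset.sum_congr rfl (fun k _ => by rw [hP k]), mulw1 a b c d e1 e2 i]
    have hv2 : ((cl e1 e2 : Fin (e1 + 1 + (e2 + 1))) : ℕ) = e1 + e2 + 1 := rfl
    have hGdv : Gd a b c d e1 e2 i (cl e1 e2)
        = if 1 ≤ (i : ℕ) then Qc a b c d e1 e2 ((i : ℕ) - 1) else 0 := by
      rw [Gd]
      simp only [Matrix.of_apply]
      conv_lhs => rw [hv2, if_neg (show ¬ (e1 + e2 + 1 = e2) by omega),
        if_pos (show e1 + e2 + 1 = e1 + e2 + 1 from rfl)]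
    rw [hGdv]
  · by_cases hj1 : j = ce2 e1 e2
    · subst hj1
      have hP : ∀ k, Pm a b c d e1 e2 k (ce2 e1 e2) = w2f b d e1 e2 (k : ℕ) := by
        intro k
        rw [Pm, updateCol_ne (ce2_ne_cl e1 e2), updateCol_self]
      rw [Finset.sum_congr rfl (fun k _ => by rw [hP k]), mulw2 a b c d e1 e2 i]
      have hv1 : ((ce2 e1 e2 : Fin (e1 + 1 + (e2 + 1))) : ℕ) = e2 := rfl
      have hGdv : Gd a b c d e1 e2 i (ce2 e1 e2)
          = if (i : ℕ) ≤ e1 + e2 then Qc a b c d e1 e2 (i : ℕ) else 0 := by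
        rw [Gd]
        simp only [Matrix.of_apply]
        conv_lhs => rw [hv1, if_pos (show e2 = e2 from rfl)]
      rw [hGdv]
    · have hP : ∀ k, Pm a b c d e1 e2 k j = (1 : Matrix (Fin (e1 + 1 + (e2 + 1)))
          (Fin (e1 + 1 + (e2 + 1))) R) k j := by
        intro k
        rw [Pm, updateCol_ne hj2, updateCol_ne hj1]
      rw [Finset.sum_congr rfl (fun k _ => by rw [hP k]), ← Matrix.mul_apply, Matrix.mul_one]
      rw [Gd]
      simp only [Matrix.of_apply]
      have hv1 : (j : ℕ) ≠ e2 := by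
        intro h
        exact hj1 (Fin.ext h)
      have hv2 : (j : ℕ) ≠ e1 + e2 + 1 := by
        intro h
        exact hj2 (Fin.ext h)
      rw [if_neg hv1, if_neg hv2]

lemma bottomSyl (a b c d : ℕ → R) (e1 e2 : ℕ) (j : Fin (e1 + 1 + (e2 + 1)))
    (h1 : (j : ℕ) ≠ e2) (h2 : (j : ℕ) ≠ e1 + e2 + 1) :
    sylMatrix (e1 + 1) (e2 + 1) (Uc a b e1) (Uc c d e2) (cl e1 e2) j = 0 := by
  have hj : (j : ℕ) < e1 + 1 + (e2 + 1) := j.isLt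
  have hv2 : ((cl e1 e2 : Fin (e1 + 1 + (e2 + 1))) : ℕ) = e1 + e2 + 1 := rfl
  rw [sylMatrix]
  simp only [Matrix.of_apply, hv2]
  by_cases hlt : (j : ℕ) < e2 + 1
  · rw [if_pos hlt, if_neg (by omega)]
  · rw [if_neg hlt, if_neg (by omega)]

lemma detGd (a b c d : ℕ → R) (e1 e2 : ℕ) :
    det (Gd a b c d e1 e2) = Qc a b c d e1 e2 (e1 + e2) *
      det ((Gd a b c d e1 e2).submatrix (cl e1 e2).succAbove (cl e1 e2).succAbove) := by
  have hlt : e1 + e2 + 1 < (e1 + 1 + e2).succ := by omega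
  have hvcl : ((cl e1 e2 : Fin (e1 + 1 + (e2 + 1))) : ℕ) = e1 + e2 + 1 := rfl
  refine Eq.trans
    (Matrix.det_succ_row (R := R) (n := e1 + 1 + e2) (Gd a b c d e1 e2) (cl e1 e2)) ?_
  rw [Finset.sum_eq_single (⟨e1 + e2 + 1, hlt⟩ : Fin ((e1 + 1 + e2).succ))]
  · have hGd : Gd a b c d e1 e2 (cl e1 e2) (⟨e1 + e2 + 1, hlt⟩ : Fin ((e1 + 1 + e2).succ))
        = Qc a b c d e1 e2 (e1 + e2) := by
      rw [Gd]
      simp only [Matrix.of_apply]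
      rw [if_neg (by omega : ¬ (e1 + e2 + 1 = e2)), if_pos trivial,
        if_pos (by omega), hvcl]
      congr 1
    have hMM : ((Gd a b c d e1 e2).submatrix (cl e1 e2).succAbove
          (Fin.succAbove (⟨e1 + e2 + 1, hlt⟩ : Fin ((e1 + 1 + e2).succ))))
        = ((Gd a b c d e1 e2).submatrix (cl e1 e2).succAbove (cl e1 e2).succAbove) := rfl
    rw [hGd, hMM]
    have hsgn : (-1 : R) ^ (((cl e1 e2 : Fin (e1 + 1 + (e2 + 1))) : ℕ)
        + (((⟨e1 + e2 + 1, hlt⟩ : Fin ((e1 + 1 + e2).succ))) : ℕ)) = 1 :=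
      Even.neg_one_pow ⟨_, rfl⟩
    rw [hsgn, one_mul]
  · intro j _ hjne
    have hjv : (j : ℕ) ≠ e1 + e2 + 1 := by
      intro h; exact hjne (Fin.ext h)
    have hGd0 : Gd a b c d e1 e2 (cl e1 e2) j = 0 := by
      rw [Gd]
      simp only [Matrix.of_apply, hvcl]
      by_cases hje : ((j : Fin (e1 + 1 + (e2 + 1))) : ℕ) = e2
      · rw [if_pos hje, if_neg (by omega)]
      · rw [if_neg hje, if_neg hjv]
        exact bottomSyl a b c d e1 e2 j hje hjv
    rw [hGd0]
    ring
  · intro h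
    exact absurd (Finset.mem_univ _) h

end Core3

section Core4

variable {R : Type*} [CommRing R]

lemma clsa_val (e1 e2 : ℕ) (x : Fin (e1 + 1 + e2)) :
    (((cl e1 e2).succAbove x : Fin (e1 + 1 + (e2 + 1))) : ℕ) = (x : ℕ) := by
  have hvcl : ((cl e1 e2 : Fin (e1 + 1 + (e2 + 1))) : ℕ) = e1 + e2 + 1 := rfl
  have hx : (x : ℕ) < e1 + 1 + e2 := x.isLt
  rw [succAbove_val (cl e1 e2) x, if_pos (by omega)]

lemma Bc_apply (a b c d : ℕ → R) (e1 e2 : ℕ) (hE : e1 + e2 + 1 = e1 + 1 + e2)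
    (i j : Fin (e1 + e2 + 1)) :
    (((Gd a b c d e1 e2).submatrix (cl e1 e2).succAbove (cl e1 e2).succAbove).submatrix
        (finCongr hE) (finCongr hE)) i j
    = if (j : ℕ) = e2 then Qc a b c d e1 e2 (i : ℕ)
      else sylMatrix (e1 + 1) (e2 + 1) (Uc a b e1) (Uc c d e2)
        ((cl e1 e2).succAbove (finCongr hE i)) ((cl e1 e2).succAbove (finCongr hE j)) := by
  have hri : (((cl e1 e2).succAbove (finCongr hE i) : Fin (e1 + 1 + (e2 + 1))) : ℕ) = (i : ℕ) := by
    rw [clsa_val]; simp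
  have hrj : (((cl e1 e2).succAbove (finCongr hE j) : Fin (e1 + 1 + (e2 + 1))) : ℕ) = (j : ℕ) := by
    rw [clsa_val]; simp
  have hi : (i : ℕ) < e1 + e2 + 1 := i.isLt
  have hj : (j : ℕ) < e1 + e2 + 1 := j.isLt
  simp only [Matrix.submatrix_apply]
  rw [Gd]
  simp only [Matrix.of_apply, hri, hrj]
  by_cases hje : (j : ℕ) = e2
  · rw [if_pos hje, if_pos hje, if_pos (by omega)]
  · rw [if_neg hje, if_neg hje, if_neg (by omega)]

lemma minor_eq (a b c d : ℕ → R) (e1 e2 : ℕ) (hE : e1 + e2 + 1 = e1 + 1 + e2)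
    (i jq : Fin ((e1 + e2).succ)) (hjq : (jq : ℕ) = e2) :
    ((((Gd a b c d e1 e2).submatrix (cl e1 e2).succAbove (cl e1 e2).succAbove).submatrix
        (finCongr hE) (finCongr hE)).submatrix i.succAbove jq.succAbove)
    = (subresMatrix (e1 + 1) (e2 + 1) (e1 + e2) (Uc a b e1) (Uc c d e2)).submatrix
        (Fin.succAbove i) id := by
  ext aa bb
  have hsv : ((jq.succAbove bb : Fin ((e1 + e2).succ)) : ℕ)
      = if (bb : ℕ) < e2 then (bb : ℕ) else (bb : ℕ) + 1 := by
    rw [succAbove_val jq bb, hjq]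
  have hbb : (bb : ℕ) < e1 + e2 := bb.isLt
  have hsvne : ((jq.succAbove bb : Fin ((e1 + e2).succ)) : ℕ) ≠ e2 := by
    rw [hsv]; split_ifs <;> omega
  rw [Matrix.submatrix_apply, Bc_apply a b c d e1 e2 hE, if_neg hsvne]
  have hrv : (((cl e1 e2).succAbove (finCongr hE (i.succAbove aa)) :
      Fin (e1 + 1 + (e2 + 1))) : ℕ) = ((i.succAbove aa : Fin ((e1 + e2).succ)) : ℕ) := by
    rw [clsa_val]; simp
  have hcv : (((cl e1 e2).succAbove (finCongr hE (jq.succAbove bb)) :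
      Fin (e1 + 1 + (e2 + 1))) : ℕ) = ((jq.succAbove bb : Fin ((e1 + e2).succ)) : ℕ) := by
    rw [clsa_val]; simp
  rw [Matrix.submatrix_apply, id_eq, sylMatrix, subresMatrix]
  simp only [Matrix.of_apply, hrv, hcv]
  rw [hsv]
  have hadd : e2 + 1 - 1 = e2 := by omega
  rw [hadd]
  by_cases hb2 : (bb : ℕ) < e2
  · rw [if_pos hb2, if_pos hb2, if_pos (by omega)]
  · rw [if_neg hb2, if_neg hb2, if_neg (by omega)]
    have h1 : (bb : ℕ) + 1 - (e2 + 1) = (bb : ℕ) - e2 := by omega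
    rw [h1]

lemma core (e1 e2 : ℕ) (a b c d : ℕ → R) :
    Qc a b c d e1 e2 (e1 + e2) * res (e1 + 1) (e2 + 1) (Uc a b e1) (Uc c d e2)
      = Qc a b c d e1 e2 (e1 + e2) * ((-1 : R) ^ (e1 + 1 + 1) *
          ∑ k ∈ Finset.range (e1 + e2 + 1),
            sres (e1 + 1) (e2 + 1) (e1 + e2) (Uc a b e1) (Uc c d e2) (e1 + e2 - k) *
              Qc a b c d e1 e2 k) := by
  have hE : e1 + e2 + 1 = e1 + 1 + e2 := by omega
  have h1 : det (Gd a b c d e1 e2)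
      = Qc a b c d e1 e2 (e1 + e2) * res (e1 + 1) (e2 + 1) (Uc a b e1) (Uc c d e2) := by
    rw [← hSylP, Matrix.det_mul, detPm, res]
    ring
  rw [← h1, detGd]
  congr 1
  have h2 := Matrix.det_submatrix_equiv_self (finCongr hE)
    ((Gd a b c d e1 e2).submatrix (cl e1 e2).succAbove (cl e1 e2).succAbove)
  refine Eq.trans h2.symm ?_
  have hlt2 : e2 < (e1 + e2).succ := by omega
  refine Eq.trans (Matrix.det_succ_column (R := R) (n := e1 + e2)
    (((Gd a b c d e1 e2).submatrix (cl e1 e2).succAbove (cl e1 e2).succAbove).submatrix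
      (finCongr hE) (finCongr hE)) (⟨e2, hlt2⟩ : Fin ((e1 + e2).succ))) ?_
  rw [← Fin.sum_univ_eq_sum_range (fun k =>
    sres (e1 + 1) (e2 + 1) (e1 + e2) (Uc a b e1) (Uc c d e2) (e1 + e2 - k) *
      Qc a b c d e1 e2 k) (e1 + e2 + 1)]
  rw [Finset.mul_sum]
  refine Finset.sum_congr rfl ?_
  intro i _
  have hBcq : (((Gd a b c d e1 e2).submatrix (cl e1 e2).succAbove
      (cl e1 e2).succAbove).submatrix (finCongr hE) (finCongr hE)) i
        (⟨e2, hlt2⟩ : Fin ((e1 + e2).succ)) = Qc a b c d e1 e2 (i : ℕ) := by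
    rw [Bc_apply a b c d e1 e2 hE, if_pos rfl]
  rw [hBcq]
  rw [sres]
  have hii : e1 + e2 - (e1 + e2 - (i : ℕ)) = (i : ℕ) := by
    have := i.isLt
    omega
  simp only [hii, Fin.eta]
  rw [minor_eq a b c d e1 e2 hE i (⟨e2, hlt2⟩ : Fin ((e1 + e2).succ)) rfl]
  have key2 : (-1 : R) ^ (e1 + 1 + 1) * (-1 : R) ^ ((i : ℕ) + (e1 + e2))
      = (-1 : R) ^ ((i : ℕ) + e2) := by
    rw [← pow_add]
    have hx : e1 + 1 + 1 + ((i : ℕ) + (e1 + e2)) = ((i : ℕ) + e2) + (e1 + 1) * 2 := by ring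
    rw [hx, pow_add, pow_mul', neg_one_sq, one_pow, mul_one]
  rw [← key2]
  ring

end Core4

section Transfer

variable {R : Type*} [CommRing R] {A : Type*} [CommRing A]

lemma sylMatrix_congr (d1 d2 : ℕ) {U U' V V' : ℕ → R} (hU : ∀ i ≤ d1, U i = U' i)
    (hV : ∀ i ≤ d2, V i = V' i) : sylMatrix d1 d2 U V = sylMatrix d1 d2 U' V' := by
  ext i j
  rw [sylMatrix, sylMatrix]
  simp only [Matrix.of_apply]
  split_ifs with h1 h2 h3
  · exact hU _ (by omega)
  · rfl
  · exact hV _ (by omega)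
  · rfl

lemma subresMatrix_congr (d1 d2 δ : ℕ) {U U' V V' : ℕ → R} (hU : ∀ i ≤ d1, U i = U' i)
    (hV : ∀ i ≤ d2, V i = V' i) :
    subresMatrix d1 d2 δ U V = subresMatrix d1 d2 δ U' V' := by
  ext i j
  rw [subresMatrix, subresMatrix]
  simp only [Matrix.of_apply]
  split_ifs with h1 h2 h3
  · exact hU _ (by omega)
  · rfl
  · exact hV _ (by omega)
  · rfl

lemma res_congr (d1 d2 : ℕ) {U U' V V' : ℕ → R} (hU : ∀ i ≤ d1, U i = U' i)
    (hV : ∀ i ≤ d2, V i = V' i) : res d1 d2 U V = res d1 d2 U' V' := by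
  rw [res, res, sylMatrix_congr d1 d2 hU hV]

lemma sres_congr (d1 d2 δ k : ℕ) {U U' V V' : ℕ → R} (hU : ∀ i ≤ d1, U i = U' i)
    (hV : ∀ i ≤ d2, V i = V' i) : sres d1 d2 δ U V k = sres d1 d2 δ U' V' k := by
  rw [sres, sres, subresMatrix_congr d1 d2 δ hU hV]

lemma map_mk (φ : R →+* A) (c : ℕ → R) (e : ℕ) :
    MvPolynomial.map φ (mk c e) = mk (fun i => φ (c i)) e := by
  rw [mk, mk, map_sum]
  refine Finset.sum_congr rfl ?_
  intro j _
  rw [_root_.map_mul, _root_.map_mul, map_pow, map_pow, MvPolynomial.map_C, MvPolynomial.map_X,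
    MvPolynomial.map_X]

lemma phi_Uc (φ : R →+* A) (a b : ℕ → R) (e i : ℕ) :
    φ (Uc a b e i) = Uc (fun n => φ (a n)) (fun n => φ (b n)) e i := by
  rw [Uc, Uc, ← MvPolynomial.coeff_map]
  congr 1
  rw [f1p, f1p, map_add, _root_.map_mul, _root_.map_mul, MvPolynomial.map_X, MvPolynomial.map_X,
    map_mk, map_mk]

lemma phi_Qc (φ : R →+* A) (a b c d : ℕ → R) (e1 e2 i : ℕ) :
    φ (Qc a b c d e1 e2 i)
      = Qc (fun n => φ (a n)) (fun n => φ (b n)) (fun n => φ (c n)) (fun n => φ (d n)) e1 e2 i := by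
  rw [Qc, Qc, ← MvPolynomial.coeff_map]
  congr 1
  rw [sylv, sylv, map_sub, _root_.map_mul, _root_.map_mul, map_mk, map_mk, map_mk, map_mk]

lemma map_sylMatrix (φ : R →+* A) (d1 d2 : ℕ) (U V : ℕ → R) :
    (sylMatrix d1 d2 U V).map φ = sylMatrix d1 d2 (fun n => φ (U n)) (fun n => φ (V n)) := by
  ext i j
  rw [Matrix.map_apply, sylMatrix, sylMatrix]
  simp only [Matrix.of_apply]
  rw [apply_ite φ, apply_ite φ, apply_ite φ, map_zero]

lemma map_subresMatrix (φ : R →+* A) (d1 d2 δ : ℕ) (U V : ℕ → R) :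
    (subresMatrix d1 d2 δ U V).map φ
      = subresMatrix d1 d2 δ (fun n => φ (U n)) (fun n => φ (V n)) := by
  ext i j
  rw [Matrix.map_apply, subresMatrix, subresMatrix]
  simp only [Matrix.of_apply]
  rw [apply_ite φ, apply_ite φ, apply_ite φ, map_zero]

lemma phi_res (φ : R →+* A) (d1 d2 : ℕ) (U V : ℕ → R) :
    φ (res d1 d2 U V) = res d1 d2 (fun n => φ (U n)) (fun n => φ (V n)) := by
  rw [res, res, RingHom.map_det, RingHom.mapMatrix_apply, map_sylMatrix]

lemma phi_sres (φ : R →+* A) (d1 d2 δ : ℕ) (U V : ℕ → R) (k : ℕ) :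
    φ (sres d1 d2 δ U V k) = sres d1 d2 δ (fun n => φ (U n)) (fun n => φ (V n)) k := by
  rw [sres, sres, _root_.map_mul, map_pow, map_neg, _root_.map_one, RingHom.map_det,
    RingHom.mapMatrix_apply, ← Matrix.submatrix_map, map_subresMatrix]

end Transfer

section Key

lemma X_ne_X {u v w z : Fin 4 × ℕ} (h1 : u ≠ w) (h2 : u ≠ z) :
    (X u * X v : MvPolynomial (Fin 4 × ℕ) ℤ) ≠ X w * X z := by
  have hXX : ∀ (p q : Fin 4 × ℕ), (X p * X q : MvPolynomial (Fin 4 × ℕ) ℤ)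
      = monomial (Finsupp.single p 1 + Finsupp.single q 1) 1 := by
    intro p q
    rw [← pow_one (X p), ← pow_one (X q), X_pow_eq_monomial, X_pow_eq_monomial, monomial_mul,
      mul_one]
  intro h
  have h2' := congrArg (coeff (Finsupp.single u 1 + Finsupp.single v 1)) h
  rw [hXX, hXX, coeff_monomial, coeff_monomial, if_pos rfl, if_neg] at h2'
  · exact one_ne_zero h2'
  · intro hc
    have h3 := congrArg (fun f => f u) hc
    simp only [Finsupp.add_apply, Finsupp.single_apply] at h3
    rw [if_neg (fun hh : w = u => h1 hh.symm), if_neg (fun hh : z = u => h2 hh.symm)] at h3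
    split_ifs at h3 <;> omega

lemma key {A : Type*} [CommRing A] (e1 e2 : ℕ) (a b c d : ℕ → A) :
    res (e1 + 1) (e2 + 1) (Uc a b e1) (Uc c d e2)
      = (-1 : A) ^ (e1 + 1 + 1) *
          ∑ k ∈ Finset.range (e1 + e2 + 1),
            sres (e1 + 1) (e2 + 1) (e1 + e2) (Uc a b e1) (Uc c d e2) (e1 + e2 - k) *
              Qc a b c d e1 e2 k := by
  set a0 : ℕ → MvPolynomial (Fin 4 × ℕ) ℤ := fun i => X ((0 : Fin 4), i) with ha0
  set b0 : ℕ → MvPolynomial (Fin 4 × ℕ) ℤ := fun i => X ((1 : Fin 4), i) with hb0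
  set c0 : ℕ → MvPolynomial (Fin 4 × ℕ) ℤ := fun i => X ((2 : Fin 4), i) with hc0
  set d0 : ℕ → MvPolynomial (Fin 4 × ℕ) ℤ := fun i => X ((3 : Fin 4), i) with hd0
  have hQ0 : Qc a0 b0 c0 d0 e1 e2 (e1 + e2) ≠ 0 := by
    rw [QcTop]
    intro h
    have h' : (X ((0 : Fin 4), e1) * X ((3 : Fin 4), e2) : MvPolynomial (Fin 4 × ℕ) ℤ)
        = X ((1 : Fin 4), e1) * X ((2 : Fin 4), e2) := by
      rw [← sub_eq_zero]
      exact h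
    exact X_ne_X (by simp [Prod.ext_iff]) (by simp [Prod.ext_iff]) h'
  have hgen2 := mul_left_cancel₀ hQ0 (core e1 e2 a0 b0 c0 d0)
  set v : Fin 4 × ℕ → A := fun p => ![a, b, c, d] p.1 p.2 with hv
  set φ : MvPolynomial (Fin 4 × ℕ) ℤ →+* A := eval₂Hom (Int.castRingHom A) v with hφ
  have hφa : (fun n => φ (a0 n)) = a := by
    funext n
    simp [hφ, ha0, hv]
  have hφb : (fun n => φ (b0 n)) = b := by
    funext n
    simp [hφ, hb0, hv]
  have hφc : (fun n => φ (c0 n)) = c := by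
    funext n
    simp [hφ, hc0, hv]
  have hφd : (fun n => φ (d0 n)) = d := by
    funext n
    simp [hφ, hd0, hv]
  have hU : (fun n => φ (Uc a0 b0 e1 n)) = Uc a b e1 := by
    funext n
    rw [phi_Uc, hφa, hφb]
  have hV : (fun n => φ (Uc c0 d0 e2 n)) = Uc c d e2 := by
    funext n
    rw [phi_Uc, hφc, hφd]
  have hQ : ∀ k, φ (Qc a0 b0 c0 d0 e1 e2 k) = Qc a b c d e1 e2 k := by
    intro k
    rw [phi_Qc, hφa, hφb, hφc, hφd]
  have hS : ∀ k, φ (sres (e1 + 1) (e2 + 1) (e1 + e2) (Uc a0 b0 e1) (Uc c0 d0 e2) k)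
      = sres (e1 + 1) (e2 + 1) (e1 + e2) (Uc a b e1) (Uc c d e2) k := by
    intro k
    rw [phi_sres, hU, hV]
  calc res (e1 + 1) (e2 + 1) (Uc a b e1) (Uc c d e2)
      = φ (res (e1 + 1) (e2 + 1) (Uc a0 b0 e1) (Uc c0 d0 e2)) := by
        rw [phi_res, hU, hV]
    _ = φ ((-1 : MvPolynomial (Fin 4 × ℕ) ℤ) ^ (e1 + 1 + 1) *
          ∑ k ∈ Finset.range (e1 + e2 + 1),
            sres (e1 + 1) (e2 + 1) (e1 + e2) (Uc a0 b0 e1) (Uc c0 d0 e2) (e1 + e2 - k) *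
              Qc a0 b0 c0 d0 e1 e2 k) := congrArg φ hgen2
    _ = (-1 : A) ^ (e1 + 1 + 1) *
          ∑ k ∈ Finset.range (e1 + e2 + 1),
            sres (e1 + 1) (e2 + 1) (e1 + e2) (Uc a b e1) (Uc c d e2) (e1 + e2 - k) *
              Qc a b c d e1 e2 k := by
        rw [_root_.map_mul, map_pow, map_neg, _root_.map_one, map_sum]
        congr 1
        refine Finset.sum_congr rfl ?_
        intro k _
        rw [_root_.map_mul, hS, hQ]

end Key

end Stmt7

open Stmt7

/-- Let `f1 = U0 X1^{d1} + ... + U_{d1} X2^{d1}` and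
`f2 = V0 X1^{d2} + ... + V_{d2} X2^{d2}` be homogeneous of degrees `d1 ≤ d2` forming a
regular sequence over a commutative ring `A`.  Write
`sylv_{(0,0)}(f1,f2) = Σ_{i=0}^{δ} q_i X1^{δ−i} X2^i` with `q_i ∈ A` and `δ = d1+d2−2`.
Then `Res(f1,f2) = (−1)^{d1+1} Σ_{i=0}^{δ} SRes_{δ−i}(f1,f2) · q_i` in `A`. -/
theorem stmt7 {A : Type*} [CommRing A] [Nontrivial A] (d1 d2 : ℕ)
    (hd1 : 1 ≤ d1) (hd12 : d1 ≤ d2) (U V : ℕ → A)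
    (f1 f2 : MvPolynomial (Fin 2) A)
    (hf1 : f1 = ∑ i ∈ Finset.range (d1 + 1), C (U i) * X 0 ^ (d1 - i) * X 1 ^ i)
    (hf2 : f2 = ∑ i ∈ Finset.range (d2 + 1), C (V i) * X 0 ^ (d2 - i) * X 1 ^ i)
    (hreg : RingTheory.Sequence.IsRegular (MvPolynomial (Fin 2) A) [f1, f2])
    -- a decomposition defining the Sylvester form `sylv_{(0,0)}(f1,f2)` ...
    (a11 a12 a21 a22 : MvPolynomial (Fin 2) A)
    (ha11 : a11.IsHomogeneous (d1 - 1)) (ha12 : a12.IsHomogeneous (d1 - 1))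
    (ha21 : a21.IsHomogeneous (d2 - 1)) (ha22 : a22.IsHomogeneous (d2 - 1))
    (hfa1 : f1 = X 0 * a11 + X 1 * a12)
    (hfa2 : f2 = X 0 * a21 + X 1 * a22)
    -- ... with coefficients `q i`
    (q : ℕ → A)
    (hq : a11 * a22 - a12 * a21 =
      ∑ i ∈ Finset.range (d1 + d2 - 2 + 1), C (q i) * X 0 ^ (d1 + d2 - 2 - i) * X 1 ^ i) :
    res d1 d2 U V =
      (-1 : A) ^ (d1 + 1) *
        ∑ i ∈ Finset.range (d1 + d2 - 2 + 1),
          sres d1 d2 (d1 + d2 - 2) U V (d1 + d2 - 2 - i) * q i := by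
  obtain ⟨e1, rfl⟩ : ∃ e, d1 = e + 1 := ⟨d1 - 1, by omega⟩
  obtain ⟨e2, rfl⟩ : ∃ e, d2 = e + 1 := ⟨d2 - 1, by omega⟩
  have hδ : e1 + 1 + (e2 + 1) - 2 = e1 + e2 := by omega
  rw [hδ] at hq ⊢
  have he1 : e1 + 1 - 1 = e1 := by omega
  have he2 : e2 + 1 - 1 = e2 := by omega
  rw [he1] at ha11 ha12
  rw [he2] at ha21 ha22
  have ea11 := hom_rep ha11
  have ea12 := hom_rep ha12
  have ea21 := hom_rep ha21
  have ea22 := hom_rep ha22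
  set α : ℕ → A := fun i => coeff (pr (e1 - i) i) a11 with hal
  set β : ℕ → A := fun i => coeff (pr (e1 - i) i) a12 with hbe
  set γ : ℕ → A := fun i => coeff (pr (e2 - i) i) a21 with hga
  set δd : ℕ → A := fun i => coeff (pr (e2 - i) i) a22 with hde
  have hf1p : f1 = f1p α β e1 := by
    rw [hfa1, f1p, ← ea11, ← ea12]
  have hf2p : f2 = f1p γ δd e2 := by
    rw [hfa2, f1p, ← ea21, ← ea22]
  have hUU : ∀ i ≤ e1 + 1, U i = Uc α β e1 i := by
    intro i hi
    have hmk : f1 = Stmt7.mk U (e1 + 1) := hf1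
    calc U i = coeff (pr (e1 + 1 - i) i) (Stmt7.mk U (e1 + 1)) := (coeff_pr_mk hi).symm
      _ = coeff (pr (e1 + 1 - i) i) (f1p α β e1) := by rw [← hmk, hf1p]
      _ = Uc α β e1 i := rfl
  have hVV : ∀ i ≤ e2 + 1, V i = Uc γ δd e2 i := by
    intro i hi
    have hmk : f2 = Stmt7.mk V (e2 + 1) := hf2
    calc V i = coeff (pr (e2 + 1 - i) i) (Stmt7.mk V (e2 + 1)) := (coeff_pr_mk hi).symm
      _ = coeff (pr (e2 + 1 - i) i) (f1p γ δd e2) := by rw [← hmk, hf2p]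
      _ = Uc γ δd e2 i := rfl
  have hqq : ∀ i ≤ e1 + e2, q i = Qc α β γ δd e1 e2 i := by
    intro i hi
    have hmkq : a11 * a22 - a12 * a21 = Stmt7.mk q (e1 + e2) := hq
    calc q i = coeff (pr (e1 + e2 - i) i) (Stmt7.mk q (e1 + e2)) := (coeff_pr_mk hi).symm
      _ = coeff (pr (e1 + e2 - i) i) (sylv α β γ δd e1 e2) := by
          rw [← hmkq]
          nth_rewrite 1 [ea11, ea12, ea21, ea22]
          exact rfl
      _ = Qc α β γ δd e1 e2 i := rfl
  rw [res_congr (e1 + 1) (e2 + 1) hUU hVV]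
  have hsum : (∑ i ∈ Finset.range (e1 + e2 + 1),
        sres (e1 + 1) (e2 + 1) (e1 + e2) U V (e1 + e2 - i) * q i)
      = ∑ i ∈ Finset.range (e1 + e2 + 1),
          sres (e1 + 1) (e2 + 1) (e1 + e2) (Uc α β e1) (Uc γ δd e2) (e1 + e2 - i) *
            Qc α β γ δd e1 e2 i := by
    refine Finset.sum_congr rfl ?_
    intro i hi
    have hi' : i ≤ e1 + e2 := by
      have := Finset.mem_range.mp hi
      omega
    rw [sres_congr (e1 + 1) (e2 + 1) (e1 + e2) (e1 + e2 - i) hUU hVV, hqq i hi']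
  rw [hsum]
  exact key e1 e2 α β γ δd


end
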